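/- There exists η₀ > 0 such that for all |η| < η₀, the truncated Thomas–Fermi system ω(z) = z - ξ(z)², (ωξ)'(z) = -η ω(z) on [0,1] with boundary conditions ω(0) = ξ(0) = 0 admits a unique C¹ solution with ω(z) > 0 for z ∈ (0,1] and ω(z) = z + O(z²) as z → 0. -/

import Mathlib

open Set

open MeasureTheory intervalIntegral BoundedContinuousFunction Filter

noncomputable section TFaux

/-- clamp to [0,1] -/
def tfClamp (z : ℝ) : ℝ := max 0 (min z 1)

lemma tfClamp_mem (z : ℝ) : tfClamp z ∈ Icc (0:ℝ) 1 := by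
  constructor
  · exact le_max_left _ _
  · simp only [tfClamp, max_le_iff]
    exact ⟨zero_le_one, min_le_right _ _⟩

lemma tfClamp_eq {z : ℝ} (hz : z ∈ Icc (0:ℝ) 1) : tfClamp z = z := by
  simp only [tfClamp]
  rw [min_eq_left hz.2, max_eq_right hz.1]

lemma continuous_tfClamp : Continuous tfClamp :=
  continuous_const.max (continuous_id.min continuous_const)

/-- the fixed point operator, pointwise -/
def tfPhi (η : ℝ) (g : ℝ → ℝ) (z : ℝ) : ℝ :=
  -η/2 + η * ((∫ t in (0:ℝ)..z, t^2 * g t^2) / z^2) + z * g z^3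

lemma tf_integrand_cont {g : ℝ → ℝ} (hg : Continuous g) :
    Continuous fun t : ℝ => t^2 * g t^2 := by fun_prop

lemma tf_integral_bound {g : ℝ → ℝ} {b : ℝ} (hb0 : 0 ≤ b) {z : ℝ} (hz : 0 ≤ z)
    (hb : ∀ t ∈ Set.Ioc (0:ℝ) z, |g t| ≤ b) :
    |∫ t in (0:ℝ)..z, t^2 * g t^2| ≤ z^3 * b^2 := by
  have h := intervalIntegral.norm_integral_le_of_norm_le_const
    (a := (0:ℝ)) (b := z) (C := z^2 * b^2) (f := fun t => t^2 * g t^2) ?_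
  · rw [Real.norm_eq_abs] at h
    calc |∫ t in (0:ℝ)..z, t^2 * g t^2| ≤ z^2*b^2 * |z - 0| := h
    _ = z^3 * b^2 := by rw [sub_zero, abs_of_nonneg hz]; ring
  · intro x hx
    rw [Set.uIoc_of_le hz] at hx
    rw [Real.norm_eq_abs, abs_mul]
    have hx0 : 0 ≤ x := le_of_lt hx.1
    have h1 : |x^2| ≤ z^2 := by
      rw [abs_of_nonneg (by positivity)]
      exact pow_le_pow_left₀ hx0 hx.2 2
    have h2 : |g x ^ 2| ≤ b^2 := by
      rw [abs_pow]
      exact pow_le_pow_left₀ (abs_nonneg _) (hb x hx) 2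
    calc |x^2| * |g x^2| ≤ z^2 * b^2 := by
          apply mul_le_mul h1 h2 (abs_nonneg _) (by positivity)

lemma tf_primitive_cont {g : ℝ → ℝ} (hg : Continuous g) :
    Continuous fun z : ℝ => ∫ t in (0:ℝ)..z, t^2 * g t^2 := by
  rw [continuous_iff_continuousAt]
  intro x
  exact ((tf_integrand_cont hg).integral_hasStrictDerivAt 0 x).hasDerivAt.continuousAt

lemma tfPhi_contOn {η : ℝ} {g : ℝ → ℝ} (hg : Continuous g)
    (hb : ∀ t, |g t| ≤ 1/10) : ContinuousOn (tfPhi η g) (Icc (0:ℝ) 1) := by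
  set F : ℝ → ℝ := fun z => ∫ t in (0:ℝ)..z, t^2 * g t^2 with hF
  have hFc : Continuous F := tf_primitive_cont hg
  have h3 : Continuous fun z : ℝ => z * g z ^ 3 := by fun_prop
  have h2 : ContinuousOn (fun z : ℝ => η * (F z / z^2)) (Icc 0 1) := by
    intro z hz
    rcases eq_or_ne z 0 with rfl | hz0
    · -- continuity at 0 within
      have hval : η * (F 0 / (0:ℝ)^2) = 0 := by
        simp [hF, intervalIntegral.integral_same]
      have hval' : (fun z => η * (F z / z^2)) 0 = 0 := hval
      unfold ContinuousWithinAt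
      rw [hval']
      apply squeeze_zero_norm' (a := fun w => |η| * (1/100) * w)
      · filter_upwards [self_mem_nhdsWithin] with w hw
        have hw0 : (0:ℝ) ≤ w := hw.1
        rcases eq_or_lt_of_le hw0 with rfl | hw0'
        · simp [hF, intervalIntegral.integral_same]
        · have hFb : |F w| ≤ w^3 * (1/10)^2 :=
            tf_integral_bound (by norm_num) hw0 (fun t _ => hb t)
          rw [Real.norm_eq_abs, abs_mul, abs_div, abs_of_nonneg (by positivity : (0:ℝ) ≤ w^2)]
          have : |F w| / w^2 ≤ w * (1/100) := by
            rw [div_le_iff₀ (by positivity)]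
            calc |F w| ≤ w^3 * (1/10)^2 := hFb
            _ = w * (1/100) * w^2 := by ring
          calc |η| * (|F w| / w^2) ≤ |η| * (w * (1/100)) :=
                mul_le_mul_of_nonneg_left this (abs_nonneg _)
          _ = |η| * (1/100) * w := by ring
      · have : Tendsto (fun w : ℝ => |η| * (1/100) * w) (nhds 0) (nhds (|η| * (1/100) * 0)) :=
          (continuous_const.mul continuous_id).tendsto 0
        rw [mul_zero] at this
        exact this.mono_left nhdsWithin_le_nhds
    · exact (continuousAt_const.mul ((hFc.continuousAt).div
        ((continuous_pow 2).continuousAt) (pow_ne_zero 2 hz0))).continuousWithinAt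
  exact (continuousOn_const.add h2).add h3.continuousOn

lemma tfPhi_zero {η : ℝ} (g : ℝ → ℝ) : tfPhi η g 0 = -η/2 := by
  simp [tfPhi, intervalIntegral.integral_same]

lemma tfPhi_bound {η : ℝ} (hη : |η| ≤ 1/100) {g : ℝ → ℝ} {z : ℝ} (hz : z ∈ Icc (0:ℝ) 1)
    (hb : ∀ t ∈ Set.Ioc (0:ℝ) z, |g t| ≤ 1/10) (hbz : |g z| ≤ 1/10) :
    |tfPhi η g z| ≤ 7/1000 := by
  rcases eq_or_lt_of_le hz.1 with rfl | hz0
  · rw [tfPhi_zero]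
    rw [abs_div, abs_neg]
    calc |η| / |2| ≤ (1/100)/|2| := by
          apply div_le_div_of_nonneg_right hη -- may need adjusting
          norm_num
    _ ≤ 7/1000 := by norm_num
  · have hFb := tf_integral_bound (by norm_num : (0:ℝ) ≤ 1/10) (le_of_lt hz0) hb
    have h1 : |(-η/2 : ℝ)| ≤ 1/200 := by
      rw [abs_div, abs_neg]
      norm_num
      linarith [hη]
    have h2 : |η * ((∫ t in (0:ℝ)..z, t^2 * g t^2) / z^2)| ≤ 1/10000 := by
      rw [abs_mul, abs_div, abs_of_nonneg (by positivity : (0:ℝ) ≤ z^2)]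
      have hq : |∫ t in (0:ℝ)..z, t^2 * g t^2| / z^2 ≤ z/100 := by
        rw [div_le_iff₀ (by positivity)]
        calc |∫ t in (0:ℝ)..z, t^2 * g t^2| ≤ z^3 * (1/10)^2 := hFb
        _ = z/100 * z^2 := by ring
      calc |η| * (|∫ t in (0:ℝ)..z, t^2 * g t^2| / z^2) ≤ (1/100) * (z/100) := by
            apply mul_le_mul hη (hq.trans (by linarith [hz.2])) (by positivity) (by norm_num)
      _ ≤ 1/10000 := by linarith [hz.2]
    have h3 : |z * g z ^ 3| ≤ 1/1000 := by
      rw [abs_mul, abs_pow]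
      calc |z| * |g z|^3 ≤ 1 * (1/10)^3 := by
            apply mul_le_mul _ (pow_le_pow_left₀ (abs_nonneg _) hbz 3) (by positivity) zero_le_one
            rw [abs_of_nonneg (le_of_lt hz0)]; exact hz.2
      _ = 1/1000 := by norm_num
    calc |tfPhi η g z| ≤ |(-η/2 : ℝ) + η * ((∫ t in (0:ℝ)..z, t^2 * g t^2) / z^2)| + |z * g z^3| :=
          abs_add_le _ _
    _ ≤ (|(-η/2 : ℝ)| + |η * ((∫ t in (0:ℝ)..z, t^2 * g t^2) / z^2)|) + |z * g z^3| := by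
          gcongr; exact abs_add_le _ _
    _ ≤ (1/200 + 1/10000) + 1/1000 := by gcongr
    _ ≤ 7/1000 := by norm_num


lemma tfPhi_lip {η : ℝ} (hη : |η| ≤ 1/100) {g h : ℝ → ℝ} (hg : Continuous g)
    (hh : Continuous h) (hbg : ∀ t, |g t| ≤ 1/10) (hbh : ∀ t, |h t| ≤ 1/10)
    {d : ℝ} (hd : 0 ≤ d) (hgh : ∀ t, |g t - h t| ≤ d) {z : ℝ} (hz : z ∈ Icc (0:ℝ) 1) :
    |tfPhi η g z - tfPhi η h z| ≤ 1/2 * d := by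
  rcases eq_or_lt_of_le hz.1 with rfl | hz0
  · rw [tfPhi_zero, tfPhi_zero, sub_self, abs_zero]
    linarith
  · have hint : ∀ f : ℝ → ℝ, Continuous f → IntervalIntegrable (fun t => t^2 * f t^2)
        volume 0 z := fun f hf => ((tf_integrand_cont hf)).intervalIntegrable 0 z
    have hsub : (∫ t in (0:ℝ)..z, t^2 * g t^2) - (∫ t in (0:ℝ)..z, t^2 * h t^2)
        = ∫ t in (0:ℝ)..z, (t^2 * g t^2 - t^2 * h t^2) :=
      (intervalIntegral.integral_sub (hint g hg) (hint h hh)).symm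
    have hIb : |∫ t in (0:ℝ)..z, (t^2 * g t^2 - t^2 * h t^2)| ≤ z^2 * (d/5) * z := by
      have := intervalIntegral.norm_integral_le_of_norm_le_const
        (a := (0:ℝ)) (b := z) (C := z^2 * (d/5))
        (f := fun t => t^2 * g t^2 - t^2 * h t^2) ?_
      · rw [Real.norm_eq_abs, sub_zero, abs_of_nonneg (le_of_lt hz0)] at this
        exact this
      · intro x hx
        rw [Set.uIoc_of_le (le_of_lt hz0)] at hx
        have hx0 : 0 ≤ x := le_of_lt hx.1
        have hfac : x^2 * g x^2 - x^2 * h x^2 = x^2 * ((g x - h x) * (g x + h x)) := by ring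
        show ‖x^2 * g x^2 - x^2 * h x^2‖ ≤ z^2 * (d/5)
        rw [Real.norm_eq_abs, hfac, abs_mul, abs_mul]
        have h1 : |x^2| ≤ z^2 := by
          rw [abs_of_nonneg (by positivity)]
          exact pow_le_pow_left₀ hx0 hx.2 2
        have h2 : |g x - h x| ≤ d := hgh x
        have h3 : |g x + h x| ≤ 1/5 := by
          calc |g x + h x| ≤ |g x| + |h x| := abs_add_le _ _
          _ ≤ 1/10 + 1/10 := add_le_add (hbg x) (hbh x)
          _ = 1/5 := by norm_num
        calc |x^2| * (|g x - h x| * |g x + h x|) ≤ z^2 * (d * (1/5)) := by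
              apply mul_le_mul h1 (mul_le_mul h2 h3 (abs_nonneg _) hd)
                (by positivity) (by positivity)
        _ = z^2 * (d/5) := by ring
    have hterm2 : |η * ((∫ t in (0:ℝ)..z, t^2 * g t^2) / z^2)
        - η * ((∫ t in (0:ℝ)..z, t^2 * h t^2) / z^2)| ≤ d/500 := by
      have heq : η * ((∫ t in (0:ℝ)..z, t^2 * g t^2) / z^2)
          - η * ((∫ t in (0:ℝ)..z, t^2 * h t^2) / z^2)
          = η * ((∫ t in (0:ℝ)..z, (t^2 * g t^2 - t^2 * h t^2)) / z^2) := by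
        rw [← hsub]; ring
      rw [heq, abs_mul, abs_div, abs_of_nonneg (by positivity : (0:ℝ) ≤ z^2)]
      have hq : |∫ t in (0:ℝ)..z, (t^2 * g t^2 - t^2 * h t^2)| / z^2 ≤ d/5 := by
        rw [div_le_iff₀ (by positivity)]
        calc |∫ t in (0:ℝ)..z, (t^2 * g t^2 - t^2 * h t^2)| ≤ z^2 * (d/5) * z := hIb
        _ ≤ z^2 * (d/5) * 1 := by gcongr; exact hz.2
        _ = d/5 * z^2 := by ring
      calc |η| * (|∫ t in (0:ℝ)..z, (t^2 * g t^2 - t^2 * h t^2)| / z^2)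
          ≤ (1/100) * (d/5) := mul_le_mul hη hq (by positivity) (by norm_num)
      _ = d/500 := by ring
    have hterm3 : |z * g z^3 - z * h z^3| ≤ 3/100 * d := by
      have hfac : z * g z^3 - z * h z^3
          = z * ((g z - h z) * (g z^2 + g z * h z + h z^2)) := by ring
      rw [hfac, abs_mul, abs_mul]
      have h4 : |g z^2 + g z * h z + h z^2| ≤ 3/100 := by
        have := hbg z; have := hbh z
        have h5 : |g z^2 + g z * h z + h z^2| ≤ |g z|^2 + |g z| * |h z| + |h z|^2 := by
          calc |g z^2 + g z * h z + h z^2| ≤ |g z^2 + g z * h z| + |h z^2| := abs_add_le _ _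
          _ ≤ |g z^2| + |g z * h z| + |h z^2| := by gcongr; exact abs_add_le _ _
          _ = |g z|^2 + |g z| * |h z| + |h z|^2 := by rw [abs_pow, abs_pow, abs_mul]
        nlinarith [abs_nonneg (g z), abs_nonneg (h z)]
      calc |z| * (|g z - h z| * |g z^2 + g z * h z + h z^2|) ≤ 1 * (d * (3/100)) := by
            apply mul_le_mul _ (mul_le_mul (hgh z) h4 (abs_nonneg _) hd) (by positivity)
              zero_le_one
            rw [abs_of_nonneg (le_of_lt hz0)]; exact hz.2
      _ = 3/100 * d := by ring
    have hsplit : tfPhi η g z - tfPhi η h z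
        = (η * ((∫ t in (0:ℝ)..z, t^2 * g t^2) / z^2)
            - η * ((∫ t in (0:ℝ)..z, t^2 * h t^2) / z^2))
          + (z * g z^3 - z * h z^3) := by
      simp only [tfPhi]; ring
    calc |tfPhi η g z - tfPhi η h z| ≤ d/500 + 3/100 * d := by
          rw [hsplit]; exact (abs_add_le _ _).trans (add_le_add hterm2 hterm3)
    _ ≤ 1/2 * d := by linarith

/-- Existence and uniqueness of the fixed point of `tfPhi` in the ball of radius 1/10. -/
lemma tfPhi_congr {η : ℝ} {g h : ℝ → ℝ} (hgh : EqOn g h (Icc (0:ℝ) 1))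
    {z : ℝ} (hz : z ∈ Icc (0:ℝ) 1) : tfPhi η g z = tfPhi η h z := by
  have hInt : (∫ t in (0:ℝ)..z, t^2 * g t^2) = ∫ t in (0:ℝ)..z, t^2 * h t^2 := by
    apply intervalIntegral.integral_congr
    intro t ht
    rw [Set.uIcc_of_le hz.1] at ht
    have : t ∈ Icc (0:ℝ) 1 := ⟨ht.1, le_trans ht.2 hz.2⟩
    simp only [hgh this]
  simp only [tfPhi, hInt, hgh hz]

lemma tf_key {η : ℝ} (hη : |η| ≤ 1/100) :
    ∃ g : ℝ → ℝ, Continuous g ∧ (∀ t, |g t| ≤ 1/10) ∧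
      (∀ z ∈ Icc (0:ℝ) 1, g z = tfPhi η g z) ∧
      (∀ h : ℝ → ℝ, Continuous h → (∀ t, |h t| ≤ 1/10) →
        (∀ z ∈ Icc (0:ℝ) 1, h z = tfPhi η h z) → EqOn g h (Icc (0:ℝ) 1)) := by
  classical
  set S : Set (ℝ →ᵇ ℝ) := Metric.closedBall 0 (1/10) with hS
  haveI : CompleteSpace S := Metric.isClosed_closedBall.completeSpace_coe
  haveI : Nonempty S := ⟨⟨0, Metric.mem_closedBall_self (by norm_num)⟩⟩
  have hmemS : ∀ f : ℝ →ᵇ ℝ, f ∈ S ↔ ‖f‖ ≤ 1/10 := by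
    intro f; rw [hS, Metric.mem_closedBall, dist_zero_right]
  have hvalbd : ∀ f : S, ∀ t : ℝ, |(f : ℝ →ᵇ ℝ) t| ≤ 1/10 := by
    intro f t
    calc |(f : ℝ →ᵇ ℝ) t| ≤ ‖(f : ℝ →ᵇ ℝ)‖ := (f : ℝ →ᵇ ℝ).norm_coe_le_norm t
    _ ≤ 1/10 := (hmemS _).1 f.2
  -- the operator
  have hTc : ∀ f : S, Continuous fun z => tfPhi η (f : ℝ →ᵇ ℝ) (tfClamp z) := by
    intro f
    exact (tfPhi_contOn (f : ℝ →ᵇ ℝ).continuous (hvalbd f)).comp_continuous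
      continuous_tfClamp tfClamp_mem
  have hTb : ∀ f : S, ∀ z : ℝ, ‖tfPhi η (f : ℝ →ᵇ ℝ) (tfClamp z)‖ ≤ 1/10 := by
    intro f z
    rw [Real.norm_eq_abs]
    exact le_trans (tfPhi_bound hη (tfClamp_mem z) (fun t _ => hvalbd f t)
      (hvalbd f _)) (by norm_num)
  set T : S → S := fun f =>
    ⟨BoundedContinuousFunction.ofNormedAddCommGroup _ (hTc f) (1/10) (hTb f),
      (hmemS _).2 (BoundedContinuousFunction.norm_ofNormedAddCommGroup_le _ (by norm_num) _)⟩
    with hT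
  have hTapp : ∀ f : S, ∀ z : ℝ, ((T f : ℝ →ᵇ ℝ) : ℝ → ℝ) z
      = tfPhi η (f : ℝ →ᵇ ℝ) (tfClamp z) := fun f z => rfl
  have hcontr : ContractingWith (1/2 : NNReal) T := by
    constructor
    · exact_mod_cast (by norm_num : (1/2 : ℝ) < 1)
    · apply LipschitzWith.of_dist_le_mul
      intro f f'
      rw [Subtype.dist_eq]
      apply (BoundedContinuousFunction.dist_le (by positivity)).2
      intro z
      rw [Real.dist_eq, hTapp, hTapp]
      have := tfPhi_lip hη (f : ℝ →ᵇ ℝ).continuous (f' : ℝ →ᵇ ℝ).continuous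
        (hvalbd f) (hvalbd f') dist_nonneg
        (fun t => by rw [← Real.dist_eq]; exact
          BoundedContinuousFunction.dist_coe_le_dist t) (tfClamp_mem z)
      calc |tfPhi η (f : ℝ →ᵇ ℝ) (tfClamp z) - tfPhi η (f' : ℝ →ᵇ ℝ) (tfClamp z)|
          ≤ 1/2 * dist (f : ℝ →ᵇ ℝ) (f' : ℝ →ᵇ ℝ) := this
      _ = (1/2 : NNReal) * dist f f' := by rw [Subtype.dist_eq]; norm_num
  set g₀ : S := hcontr.fixedPoint T with hg₀
  have hfix : T g₀ = g₀ := hcontr.fixedPoint_isFixedPt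
  set g : ℝ → ℝ := fun z => ((g₀ : ℝ →ᵇ ℝ) : ℝ → ℝ) z with hg
  have hgfix : ∀ z ∈ Icc (0:ℝ) 1, g z = tfPhi η g z := by
    intro z hz
    have h1 : ((T g₀ : ℝ →ᵇ ℝ) : ℝ → ℝ) z = ((g₀ : ℝ →ᵇ ℝ) : ℝ → ℝ) z := by rw [hfix]
    have h2 := hTapp g₀ z
    rw [tfClamp_eq hz] at h2
    exact h1.symm.trans h2
  refine ⟨g, (g₀ : ℝ →ᵇ ℝ).continuous, hvalbd g₀, hgfix, ?_⟩
  -- uniqueness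
  intro h hhc hhb hhfix
  set H : ℝ →ᵇ ℝ := BoundedContinuousFunction.ofNormedAddCommGroup (fun z => h (tfClamp z))
    (hhc.comp continuous_tfClamp) (1/10)
    (fun t => by rw [Real.norm_eq_abs]; exact hhb _) with hH
  have hHS : H ∈ S := (hmemS _).2
    (BoundedContinuousFunction.norm_ofNormedAddCommGroup_le _ (by norm_num) _)
  have hHfix : T ⟨H, hHS⟩ = ⟨H, hHS⟩ := by
    apply Subtype.ext
    apply BoundedContinuousFunction.ext
    intro z
    rw [hTapp]
    have hcz := tfClamp_mem z
    have hHh : EqOn (H : ℝ → ℝ) h (Icc (0:ℝ) 1) := by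
      intro t ht
      show h (tfClamp t) = h t
      rw [tfClamp_eq ht]
    have : tfPhi η (H : ℝ → ℝ) (tfClamp z) = tfPhi η h (tfClamp z) := tfPhi_congr hHh hcz
    rw [this, ← hhfix _ hcz]
    rfl
  have : (⟨H, hHS⟩ : S) = g₀ := hcontr.fixedPoint_unique hHfix
  intro z hz
  have h3 := congrArg (fun f : S => ((f : ℝ →ᵇ ℝ) : ℝ → ℝ) z) this
  have h4 : ((H : ℝ →ᵇ ℝ) : ℝ → ℝ) z = h z := by
    show h (tfClamp z) = h z
    rw [tfClamp_eq hz]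
  exact (h3.symm.trans h4 : _)


/-! ### Analysis of the solution -/

def tfXi (g : ℝ → ℝ) (z : ℝ) : ℝ := z * g z

def tfOmega (g : ℝ → ℝ) (z : ℝ) : ℝ := z - (z * g z)^2

def tfU (η : ℝ) (g : ℝ → ℝ) (z : ℝ) : ℝ := -η * ∫ t in (0:ℝ)..z, tfOmega g t

def tfD (η : ℝ) (g : ℝ → ℝ) (z : ℝ) : ℝ :=
  (-η * (1 - z * g z^2) - g z) / (1 - 3 * z * g z^2)

section SolAnalysis

variable {η : ℝ} {g : ℝ → ℝ}

lemma tf_g0 (hη : |η| ≤ 1/100) (hfix : ∀ z ∈ Icc (0:ℝ) 1, g z = tfPhi η g z) :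
    g 0 = -η/2 := by
  have := hfix 0 ⟨le_refl 0, zero_le_one⟩
  rwa [tfPhi_zero] at this

lemma tfOmega_cont (hg : Continuous g) : Continuous (tfOmega g) := by
  unfold tfOmega; fun_prop

lemma tfXi_cont (hg : Continuous g) : Continuous (tfXi g) := by
  unfold tfXi; fun_prop

lemma tf_int_omega (hg : Continuous g) (z : ℝ) :
    (∫ t in (0:ℝ)..z, tfOmega g t) = z^2/2 - ∫ t in (0:ℝ)..z, t^2 * g t^2 := by
  have h1 : ∀ t : ℝ, tfOmega g t = t - t^2 * g t^2 := by
    intro t; unfold tfOmega; ring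
  have h2 : (∫ t in (0:ℝ)..z, tfOmega g t) = ∫ t in (0:ℝ)..z, (t - t^2 * g t^2) := by
    apply intervalIntegral.integral_congr; intro t _; exact h1 t
  rw [h2, intervalIntegral.integral_sub (intervalIntegrable_id)
    ((tf_integrand_cont hg).intervalIntegrable 0 z), integral_id]
  norm_num

lemma tf_Ueq (hg : Continuous g) (hfix : ∀ z ∈ Icc (0:ℝ) 1, g z = tfPhi η g z)
    {z : ℝ} (hz : z ∈ Icc (0:ℝ) 1) : tfOmega g z * tfXi g z = tfU η g z := by
  rcases eq_or_lt_of_le hz.1 with rfl | hz0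
  · simp [tfOmega, tfXi, tfU, intervalIntegral.integral_same]
  · have hz' : z ≠ 0 := ne_of_gt hz0
    have e := hfix z hz
    simp only [tfPhi] at e
    have h3 : z^2 * (η * ((∫ t in (0:ℝ)..z, t^2 * g t^2) / z^2))
        = η * ∫ t in (0:ℝ)..z, t^2 * g t^2 := by field_simp
    have e2 : z^2 * g z = z^2 * (-η/2) + η * (∫ t in (0:ℝ)..z, t^2 * g t^2)
        + z^3 * g z^3 := by
      calc z^2 * g z
          = z^2 * (-η/2 + η * ((∫ t in (0:ℝ)..z, t^2 * g t^2) / z^2) + z * g z^3) := by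
            rw [← e]
      _ = z^2 * (-η/2) + z^2 * (η * ((∫ t in (0:ℝ)..z, t^2 * g t^2) / z^2))
            + z^3 * g z^3 := by ring
      _ = z^2 * (-η/2) + η * (∫ t in (0:ℝ)..z, t^2 * g t^2) + z^3 * g z^3 := by rw [h3]
    show tfOmega g z * tfXi g z = tfU η g z
    unfold tfU
    rw [tf_int_omega hg z]
    unfold tfOmega tfXi
    linear_combination e2

lemma tf_U_hasDeriv (hg : Continuous g) (z : ℝ) :
    HasDerivAt (tfU η g) (-η * tfOmega g z) z := by
  have h := ((tfOmega_cont hg).integral_hasStrictDerivAt 0 z).hasDerivAt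
  exact h.const_mul (-η)

lemma tf_gz_sq (hb : ∀ t, |g t| ≤ 1/10) (t : ℝ) : g t^2 ≤ 1/100 := by
  have := hb t
  nlinarith [abs_nonneg (g t), sq_abs (g t)]

lemma tf_den_pos (hb : ∀ t, |g t| ≤ 1/10) {z : ℝ} (hz : z ∈ Icc (0:ℝ) 1) :
    (0:ℝ) < 1 - 3 * z * g z^2 := by
  have h1 := tf_gz_sq hb z
  nlinarith [hz.1, hz.2, sq_nonneg (g z)]

lemma tf_den2_pos (hb : ∀ t, |g t| ≤ 1/10) {z : ℝ} (hz0 : 0 < z) (hz1 : z ≤ 1) :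
    (0:ℝ) < z - 3 * (tfXi g z)^2 := by
  have h1 := tf_gz_sq hb z
  simp only [tfXi]
  have hzz : z^2 ≤ z := by nlinarith
  have k : z^2 * g z^2 ≤ z * (1/100) := by nlinarith [sq_nonneg z, sq_nonneg (g z)]
  nlinarith [k]

lemma tf_D_cont (hg : Continuous g) (hb : ∀ t, |g t| ≤ 1/10) :
    ContinuousOn (tfD η g) (Icc (0:ℝ) 1) := by
  apply ContinuousOn.div
  · fun_prop
  · fun_prop
  · intro z hz
    exact ne_of_gt (tf_den_pos hb hz)

lemma tf_xi_hasDeriv (hη : |η| ≤ 1/100) (hg : Continuous g) (hb : ∀ t, |g t| ≤ 1/10)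
    (hfix : ∀ z ∈ Icc (0:ℝ) 1, g z = tfPhi η g z) {z : ℝ} (hz : z ∈ Icc (0:ℝ) 1) :
    HasDerivWithinAt (tfXi g) (tfD η g z) (Icc (0:ℝ) 1) z := by
  rcases eq_or_lt_of_le hz.1 with rfl | hz0
  · -- z = 0
    have hD0 : tfD η g 0 = g 0 := by
      simp only [tfD]
      rw [tf_g0 hη hfix]
      norm_num
      ring
    rw [hasDerivWithinAt_iff_tendsto_slope, hD0]
    have hslope : ∀ w ∈ Icc (0:ℝ) 1 \ {(0:ℝ)}, slope (tfXi g) 0 w = g w := by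
      intro w hw
      have hw0 : w ≠ 0 := hw.2
      rw [slope_def_field]
      simp only [tfXi]
      field_simp
      ring
    apply Tendsto.congr' _ ((hg.tendsto 0).mono_left nhdsWithin_le_nhds)
    filter_upwards [self_mem_nhdsWithin] with w hw
    exact (hslope w hw).symm
  · -- z > 0
    have hz' : z ≠ 0 := ne_of_gt hz0
    have hden := tf_den_pos hb hz
    have hden2 := tf_den2_pos hb hz0 hz.2
    have hDalt : tfD η g z = (-η * tfOmega g z - tfXi g z) / (z - 3 * (tfXi g z)^2) := by
      simp only [tfD, tfOmega, tfXi]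
      rw [div_eq_div_iff (ne_of_gt hden) ?h2]
      · ring
      · have := tf_den2_pos hb hz0 hz.2
        simp only [tfXi] at this
        exact ne_of_gt this
    rw [hasDerivWithinAt_iff_tendsto_slope, hDalt]
    set num : ℝ → ℝ := fun w => slope (tfU η g) z w - tfXi g w with hnum
    set den : ℝ → ℝ := fun w => z - (tfXi g w^2 + tfXi g w * tfXi g z + tfXi g z^2)
      with hden'
    have hfilt : nhdsWithin z (Icc (0:ℝ) 1 \ {z}) ≤ nhdsWithin z {z}ᶜ :=
      nhdsWithin_mono z (fun w hw => hw.2)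
    have htn : Tendsto num (nhdsWithin z (Icc (0:ℝ) 1 \ {z}))
        (nhds (-η * tfOmega g z - tfXi g z)) := by
      apply Tendsto.sub
      · exact (hasDerivAt_iff_tendsto_slope.1 (tf_U_hasDeriv hg z)).mono_left hfilt
      · exact ((tfXi_cont hg).tendsto z).mono_left nhdsWithin_le_nhds
    have htd : Tendsto den (nhdsWithin z (Icc (0:ℝ) 1 \ {z}))
        (nhds (z - 3 * (tfXi g z)^2)) := by
      have : Tendsto den (nhds z) (nhds (den z)) := by
        apply ContinuousAt.tendsto
        have := tfXi_cont hg
        fun_prop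
      have hdz : den z = z - 3 * (tfXi g z)^2 := by simp only [hden']; ring
      rw [hdz] at this
      exact this.mono_left nhdsWithin_le_nhds
    have hne : (z - 3 * (tfXi g z)^2) ≠ 0 := ne_of_gt hden2
    apply Tendsto.congr' _ (htn.div htd hne)
    have hek := htd.eventually_ne hne
    filter_upwards [self_mem_nhdsWithin, hek] with w hw hdw
    have hwz : w - z ≠ 0 := sub_ne_zero.2 hw.2
    have hUw := tf_Ueq hg hfix hw.1
    have hUz := tf_Ueq hg hfix hz
    have hid : (tfXi g w - tfXi g z) * den w
        = (tfU η g w - tfU η g z) - (w - z) * tfXi g w := by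
      rw [← hUw, ← hUz]
      simp only [hden', tfOmega, tfXi]
      ring
    show num w / den w = slope (tfXi g) z w
    rw [slope_def_field]
    simp only [hnum]
    rw [slope_def_field]
    rw [div_eq_div_iff hdw hwz]
    field_simp
    linear_combination -hid


lemma tf_xi_contDiff (hη : |η| ≤ 1/100) (hg : Continuous g) (hb : ∀ t, |g t| ≤ 1/10)
    (hfix : ∀ z ∈ Icc (0:ℝ) 1, g z = tfPhi η g z) :
    ContDiffOn ℝ 1 (tfXi g) (Icc (0:ℝ) 1) := by
  have hu : UniqueDiffOn ℝ (Icc (0:ℝ) 1) := uniqueDiffOn_Icc one_pos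
  have hd : DifferentiableOn ℝ (tfXi g) (Icc 0 1) :=
    fun z hz => (tf_xi_hasDeriv hη hg hb hfix hz).differentiableWithinAt
  have hdw : EqOn (derivWithin (tfXi g) (Icc (0:ℝ) 1)) (tfD η g) (Icc (0:ℝ) 1) :=
    fun z hz => (tf_xi_hasDeriv hη hg hb hfix hz).derivWithin (hu z hz)
  have hcd : ContDiffOn ℝ ((0:ℕ) + 1) (tfXi g) (Icc (0:ℝ) 1) := by
    rw [contDiffOn_succ_iff_derivWithin hu]
    refine ⟨hd, ?_, ?_⟩
    · intro h
      exact absurd h (by simp)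
    · have : ContDiffOn ℝ 0 (derivWithin (tfXi g) (Icc (0:ℝ) 1)) (Icc (0:ℝ) 1) := by
        rw [contDiffOn_zero]
        exact (tf_D_cont hg hb).congr hdw
      exact_mod_cast this
  simpa using hcd

lemma tf_omega_contDiff (hη : |η| ≤ 1/100) (hg : Continuous g) (hb : ∀ t, |g t| ≤ 1/10)
    (hfix : ∀ z ∈ Icc (0:ℝ) 1, g z = tfPhi η g z) :
    ContDiffOn ℝ 1 (tfOmega g) (Icc (0:ℝ) 1) := by
  have h1 : tfOmega g = fun z => z - (tfXi g z)^2 := rfl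
  rw [h1]
  exact contDiffOn_id.sub ((tf_xi_contDiff hη hg hb hfix).pow 2)

lemma tf_prod_deriv (hg : Continuous g) (hfix : ∀ z ∈ Icc (0:ℝ) 1, g z = tfPhi η g z)
    {z : ℝ} (hz : z ∈ Icc (0:ℝ) 1) :
    HasDerivWithinAt (fun t => tfOmega g t * tfXi g t) (-η * tfOmega g z)
      (Icc (0:ℝ) 1) z := by
  have h := (tf_U_hasDeriv (η := η) hg z).hasDerivWithinAt (s := Icc (0:ℝ) 1)
  exact h.congr (fun w hw => tf_Ueq hg hfix hw) (tf_Ueq hg hfix hz)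

lemma tf_omega_pos (hb : ∀ t, |g t| ≤ 1/10) {z : ℝ} (hz : z ∈ Ioc (0:ℝ) 1) :
    0 < tfOmega g z := by
  have h1 := tf_gz_sq hb z
  have hz0 := hz.1
  have hz1 := hz.2
  simp only [tfOmega]
  have hzz : z^2 ≤ z := by nlinarith
  have k : z^2 * g z^2 ≤ z * (1/100) := by nlinarith [sq_nonneg z, sq_nonneg (g z)]
  nlinarith [k]

lemma tf_omega_approx (hb : ∀ t, |g t| ≤ 1/10) {z : ℝ} (hz : z ∈ Icc (0:ℝ) 1) :
    |tfOmega g z - z| ≤ 1 * z^2 := by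
  have h1 := tf_gz_sq hb z
  simp only [tfOmega]
  rw [show z - (z * g z)^2 - z = -(z^2 * g z^2) by ring, abs_neg,
    abs_of_nonneg (by positivity)]
  nlinarith [sq_nonneg z]

end SolAnalysis

/-- Any `C¹` solution of the truncated TF system gives a fixed point of `tfPhi`. -/
lemma tf_competitor {η : ℝ} (hη : |η| ≤ 1/100) {ω' ξ' : ℝ → ℝ}
    (hωc : ContDiffOn ℝ 1 ω' (Icc (0:ℝ) 1)) (hξc : ContDiffOn ℝ 1 ξ' (Icc (0:ℝ) 1))
    (hω0 : ω' 0 = 0) (hξ0 : ξ' 0 = 0)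
    (hωeq : ∀ z ∈ Icc (0:ℝ) 1, ω' z = z - ξ' z ^ 2)
    (hder : ∀ z ∈ Icc (0:ℝ) 1,
      HasDerivWithinAt (fun t => ω' t * ξ' t) (-η * ω' z) (Icc (0:ℝ) 1) z) :
    ∃ g2 : ℝ → ℝ, Continuous g2 ∧ (∀ t, |g2 t| ≤ 1/10) ∧
      (∀ z ∈ Icc (0:ℝ) 1, g2 z = tfPhi η g2 z) ∧
      (∀ z ∈ Icc (0:ℝ) 1, ξ' z = z * g2 z) := by
  have hξcont : ContinuousOn ξ' (Icc (0:ℝ) 1) := hξc.continuousOn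
  have hωcont : ContinuousOn ω' (Icc (0:ℝ) 1) := hωc.continuousOn
  have h0I : (0:ℝ) ∈ Icc (0:ℝ) 1 := ⟨le_refl 0, zero_le_one⟩
  -- Step A : fundamental theorem of calculus
  have hA : ∀ z ∈ Icc (0:ℝ) 1, ω' z * ξ' z = -η * ∫ t in (0:ℝ)..z, ω' t := by
    intro z hz
    have hsub : Icc (0:ℝ) z ⊆ Icc 0 1 := Icc_subset_Icc (le_refl 0) hz.2
    have hcont : ContinuousOn (fun t => ω' t * ξ' t) (Icc 0 z) :=
      (hωcont.mul hξcont).mono hsub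
    have hderiv : ∀ x ∈ Ioo (0:ℝ) z,
        HasDerivWithinAt (fun t => ω' t * ξ' t) (-η * ω' x) (Ioi x) x := by
      intro x hx
      have hxI : x ∈ Icc (0:ℝ) 1 := ⟨le_of_lt hx.1, le_trans (le_of_lt hx.2) hz.2⟩
      exact ((hder x hxI).hasDerivAt
        (Icc_mem_nhds hx.1 (lt_of_lt_of_le hx.2 hz.2))).hasDerivWithinAt
    have hint : IntervalIntegrable (fun t => -η * ω' t) volume 0 z := by
      apply ContinuousOn.intervalIntegrable
      rw [Set.uIcc_of_le hz.1]
      exact continuousOn_const.mul (hωcont.mono hsub)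
    have hftc := intervalIntegral.integral_eq_sub_of_hasDeriv_right_of_le hz.1 hcont
      hderiv hint
    have hcm : (∫ t in (0:ℝ)..z, -η * ω' t) = -η * ∫ t in (0:ℝ)..z, ω' t :=
      intervalIntegral.integral_const_mul _ _
    rw [hcm, hω0, zero_mul, sub_zero] at hftc
    exact hftc.symm
  -- the quotient function
  set d := derivWithin ξ' (Icc (0:ℝ) 1) 0 with hd
  set g1 : ℝ → ℝ := fun z => if z = 0 then d else ξ' z / z with hg1def
  have hg10 : g1 0 = d := if_pos rfl
  have hg1ne : ∀ z : ℝ, z ≠ 0 → g1 z = ξ' z / z := fun z hz => if_neg hz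
  have hξeq : ∀ z ∈ Icc (0:ℝ) 1, ξ' z = z * g1 z := by
    intro z hz
    rcases eq_or_ne z 0 with rfl | hz0
    · rw [hξ0, zero_mul]
    · rw [hg1ne z hz0]; field_simp
  have hg1cont : ContinuousOn g1 (Icc (0:ℝ) 1) := by
    intro z hz
    rcases eq_or_ne z 0 with rfl | hz0
    · have hdiff : HasDerivWithinAt ξ' d (Icc (0:ℝ) 1) 0 :=
        ((hξc.differentiableOn one_ne_zero) 0 h0I).hasDerivWithinAt
      have hslope := hasDerivWithinAt_iff_tendsto_slope.1 hdiff
      have hcg : Tendsto g1 (nhdsWithin 0 (Icc (0:ℝ) 1 \ {0})) (nhds d) := by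
        apply Tendsto.congr' _ hslope
        filter_upwards [self_mem_nhdsWithin] with w hw
        rw [slope_def_field, hξ0, sub_zero, sub_zero, hg1ne w hw.2]
      have hsubset : Icc (0:ℝ) 1 ⊆ insert 0 (Icc (0:ℝ) 1 \ {0}) := by
        intro w hw
        rcases eq_or_ne w 0 with rfl | hw0
        · exact mem_insert _ _
        · exact mem_insert_of_mem _ ⟨hw, hw0⟩
      have hpure : Tendsto g1 (pure (0:ℝ)) (nhds d) := by
        rw [← hg10]
        exact tendsto_pure_nhds g1 0
      have hsup : Tendsto g1 (nhdsWithin 0 (insert 0 (Icc (0:ℝ) 1 \ {0}))) (nhds d) := by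
        rw [nhdsWithin_insert]
        exact tendsto_sup.2 ⟨hpure, hcg⟩
      unfold ContinuousWithinAt
      rw [hg10]
      exact hsup.mono_left (nhdsWithin_mono 0 hsubset)
    · have hbase : ContinuousWithinAt (fun w => ξ' w / w) (Icc (0:ℝ) 1) z :=
        (hξcont z hz).div continuousWithinAt_id hz0
      apply hbase.congr_of_eventuallyEq _ (hg1ne z hz0)
      filter_upwards [(isOpen_compl_singleton.eventually_mem hz0).filter_mono
        nhdsWithin_le_nhds] with w hw
      exact hg1ne w hw
  -- fixed point identity away from 0
  have hkey : ∀ z ∈ Icc (0:ℝ) 1, z ≠ 0 → g1 z = tfPhi η g1 z := by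
    intro z hz hz0
    have hsub : Icc (0:ℝ) z ⊆ Icc 0 1 := Icc_subset_Icc (le_refl 0) hz.2
    have hIcc : Set.uIcc (0:ℝ) z = Icc 0 z := Set.uIcc_of_le hz.1
    have hint1 : (∫ t in (0:ℝ)..z, ω' t) = ∫ t in (0:ℝ)..z, (t - t^2 * g1 t^2) := by
      apply intervalIntegral.integral_congr
      intro t ht
      rw [hIcc] at ht
      have htI : t ∈ Icc (0:ℝ) 1 := hsub ht
      show ω' t = t - t^2 * g1 t^2
      rw [hωeq t htI, hξeq t htI]; ring
    have hintg : IntervalIntegrable (fun t => t^2 * g1 t^2) volume 0 z := by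
      apply ContinuousOn.intervalIntegrable
      rw [hIcc]
      exact (continuousOn_id.pow 2).mul ((hg1cont.mono hsub).pow 2)
    have hint2 : (∫ t in (0:ℝ)..z, (t - t^2 * g1 t^2))
        = z^2/2 - ∫ t in (0:ℝ)..z, t^2 * g1 t^2 := by
      rw [intervalIntegral.integral_sub intervalIntegrable_id hintg, integral_id]
      norm_num
    have hAz : (z - (z * g1 z)^2) * (z * g1 z)
        = -η * (z^2/2 - ∫ t in (0:ℝ)..z, t^2 * g1 t^2) := by
      have h := hA z hz
      rw [hint1, hint2, hωeq z hz, hξeq z hz] at h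
      exact h
    have e3 : z^2 * g1 z = z^2 * (-η/2) + η * (∫ t in (0:ℝ)..z, t^2 * g1 t^2)
        + z^3 * g1 z^3 := by linear_combination hAz
    have hz2 : (z:ℝ)^2 ≠ 0 := pow_ne_zero 2 hz0
    simp only [tfPhi]
    field_simp
    linear_combination 2 * e3
  -- uniform bound on [0,1]
  obtain ⟨K, hK⟩ := isCompact_Icc.exists_bound_of_continuousOn hg1cont
  have hK' : ∀ t ∈ Icc (0:ℝ) 1, |g1 t| ≤ K := fun t ht => by
    have := hK t ht; rwa [Real.norm_eq_abs] at this
  have hK0 : 0 ≤ K := le_trans (abs_nonneg _) (hK' 0 h0I)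
  -- value at zero
  have hd0 : g1 0 = -η/2 := by
    have h0cl : (0:ℝ) ∈ closure (Ioc (0:ℝ) 1) := by
      rw [closure_Ioc (zero_ne_one' ℝ)]; exact h0I
    haveI := mem_closure_iff_nhdsWithin_neBot.1 h0cl
    have h1 : Tendsto g1 (nhdsWithin 0 (Ioc (0:ℝ) 1)) (nhds (g1 0)) :=
      (hg1cont 0 h0I).mono_left (nhdsWithin_mono 0 Ioc_subset_Icc_self)
    have hterm2 : Tendsto (fun z => η * ((∫ t in (0:ℝ)..z, t^2 * g1 t^2) / z^2))
        (nhdsWithin 0 (Ioc (0:ℝ) 1)) (nhds 0) := by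
      apply squeeze_zero_norm' (a := fun z => |η| * K^2 * z)
      · filter_upwards [self_mem_nhdsWithin] with w hw
        have hFb : |∫ t in (0:ℝ)..w, t^2 * g1 t^2| ≤ w^3 * K^2 :=
          tf_integral_bound hK0 (le_of_lt hw.1)
            (fun t ht => hK' t ⟨le_of_lt ht.1, le_trans ht.2 hw.2⟩)
        rw [Real.norm_eq_abs, abs_mul, abs_div,
          abs_of_nonneg (sq_nonneg w)]
        have hq : |∫ t in (0:ℝ)..w, t^2 * g1 t^2| / w^2 ≤ w * K^2 := by
          rw [div_le_iff₀ (pow_pos hw.1 2)]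
          calc |∫ t in (0:ℝ)..w, t^2 * g1 t^2| ≤ w^3 * K^2 := hFb
          _ = w * K^2 * w^2 := by ring
        calc |η| * (|∫ t in (0:ℝ)..w, t^2 * g1 t^2| / w^2) ≤ |η| * (w * K^2) :=
              mul_le_mul_of_nonneg_left hq (abs_nonneg _)
        _ = |η| * K^2 * w := by ring
      · have : Tendsto (fun z : ℝ => |η| * K^2 * z) (nhds 0) (nhds (|η| * K^2 * 0)) :=
          (continuous_const.mul continuous_id).tendsto 0
        rw [mul_zero] at this
        exact this.mono_left nhdsWithin_le_nhds
    have hterm3 : Tendsto (fun z => z * g1 z^3) (nhdsWithin 0 (Ioc (0:ℝ) 1))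
        (nhds 0) := by
      have hg1t : Tendsto g1 (nhdsWithin 0 (Ioc (0:ℝ) 1)) (nhds (g1 0)) := h1
      have hidt : Tendsto (fun z : ℝ => z) (nhdsWithin 0 (Ioc (0:ℝ) 1)) (nhds 0) :=
        tendsto_id.mono_left nhdsWithin_le_nhds
      have := hidt.mul (hg1t.pow 3)
      rwa [zero_mul] at this
    have h2 : Tendsto g1 (nhdsWithin 0 (Ioc (0:ℝ) 1)) (nhds (-η/2)) := by
      have heq : ∀ᶠ z in nhdsWithin 0 (Ioc (0:ℝ) 1), g1 z
          = -η/2 + η * ((∫ t in (0:ℝ)..z, t^2 * g1 t^2) / z^2) + z * g1 z^3 := by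
        filter_upwards [self_mem_nhdsWithin] with w hw
        exact hkey w (Ioc_subset_Icc_self hw) (ne_of_gt hw.1)
      rw [tendsto_congr' heq]
      have := (tendsto_const_nhds (x := -η/2)
        (f := nhdsWithin (0:ℝ) (Ioc (0:ℝ) 1))).add hterm2 |>.add hterm3
      simpa using this
    exact tendsto_nhds_unique h1 h2
  have hfix1 : ∀ z ∈ Icc (0:ℝ) 1, g1 z = tfPhi η g1 z := by
    intro z hz
    rcases eq_or_ne z 0 with rfl | hz0
    · rw [tfPhi_zero, hd0]
    · exact hkey z hz hz0
  -- globalize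
  set g2 : ℝ → ℝ := fun z => g1 (tfClamp z) with hg2def
  have hg2cont : Continuous g2 := hg1cont.comp_continuous continuous_tfClamp tfClamp_mem
  have hg2eq : EqOn g2 g1 (Icc (0:ℝ) 1) := by
    intro t ht
    show g1 (tfClamp t) = g1 t
    rw [tfClamp_eq ht]
  -- the a priori bound
  have hbound : ∀ t ∈ Icc (0:ℝ) 1, |g1 t| ≤ 1/10 := by
    by_contra hcon
    push_neg at hcon
    obtain ⟨t0, ht0I, ht0⟩ := hcon
    set A : Set ℝ := {t ∈ Icc (0:ℝ) 1 | 1/10 ≤ |g2 t|} with hA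
    have hAne : A.Nonempty := ⟨t0, ht0I, by rw [hg2eq ht0I]; linarith⟩
    have hAclosed : IsClosed A := by
      have : A = Icc (0:ℝ) 1 ∩ {t | 1/10 ≤ |g2 t|} := rfl
      rw [this]
      exact isClosed_Icc.inter (isClosed_le continuous_const hg2cont.abs)
    have hAbdd : BddBelow A := ⟨0, fun t ht => ht.1.1⟩
    set zs := sInf A with hzs
    have hzsA : zs ∈ A := hAclosed.csInf_mem hAne hAbdd
    have hzsI : zs ∈ Icc (0:ℝ) 1 := hzsA.1
    have hzsg : 1/10 ≤ |g1 zs| := by rw [← hg2eq hzsI]; exact hzsA.2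
    have hzs0 : 0 < zs := by
      rcases eq_or_lt_of_le hzsI.1 with h | h
      · exfalso
        rw [← h, hd0] at hzsg
        have habs : |(-η/2 : ℝ)| = |η|/2 := by
          rw [abs_div, abs_neg, abs_two]
        rw [habs] at hzsg
        linarith
      · exact h
    have hlt : ∀ t ∈ Ico (0:ℝ) zs, |g1 t| < 1/10 := by
      intro t ht
      by_contra hge
      push_neg at hge
      have htI : t ∈ Icc (0:ℝ) 1 := ⟨ht.1, le_trans (le_of_lt ht.2) hzsI.2⟩
      have htA : t ∈ A := ⟨htI, by rw [hg2eq htI]; exact hge⟩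
      have := csInf_le hAbdd htA
      rw [← hzs] at this
      linarith [ht.2]
    have hzsle : |g1 zs| ≤ 1/10 := by
      have h0cl : zs ∈ closure (Ico (0:ℝ) zs) := by
        rw [closure_Ico (ne_of_gt hzs0).symm]
        exact ⟨le_of_lt hzs0, le_refl _⟩
      haveI := mem_closure_iff_nhdsWithin_neBot.1 h0cl
      have htend : Tendsto (fun t => |g2 t|) (nhdsWithin zs (Ico 0 zs)) (nhds |g2 zs|) :=
        ((hg2cont.abs).tendsto zs).mono_left nhdsWithin_le_nhds
      have hev : ∀ᶠ t in nhdsWithin zs (Ico (0:ℝ) zs), |g2 t| ≤ 1/10 := by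
        filter_upwards [self_mem_nhdsWithin] with t ht
        have htI : t ∈ Icc (0:ℝ) 1 := ⟨ht.1, le_trans (le_of_lt ht.2) hzsI.2⟩
        rw [hg2eq htI]
        exact le_of_lt (hlt t ht)
      have := le_of_tendsto htend hev
      rwa [hg2eq hzsI] at this
    have hb1 : ∀ t ∈ Set.Ioc (0:ℝ) zs, |g1 t| ≤ 1/10 := by
      intro t ht
      rcases lt_or_eq_of_le ht.2 with h | h
      · exact le_of_lt (hlt t ⟨le_of_lt ht.1, h⟩)
      · rw [h]; exact hzsle
    have hfinal := tfPhi_bound hη hzsI hb1 hzsle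
    rw [← hfix1 zs hzsI] at hfinal
    linarith
  refine ⟨g2, hg2cont, ?_, ?_, ?_⟩
  · intro t
    exact hbound _ (tfClamp_mem t)
  · intro z hz
    rw [hg2eq hz, hfix1 z hz]
    exact tfPhi_congr (fun t ht => (hg2eq ht).symm) hz
  · intro z hz
    rw [hξeq z hz, hg2eq hz]

end TFaux


/-- There exists `η₀ > 0` such that for all `|η| < η₀`, the truncated Thomas–Fermi system
`ω(z) = z - ξ(z)²`, `(ωξ)'(z) = -η ω(z)` on `[0,1]` with `ω(0) = ξ(0) = 0` admits a
unique `C¹` solution, which satisfies `ω(z) > 0` on `(0,1]` and `ω(z) = z + O(z²)` as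
`z → 0`. -/
theorem truncated_TF_system_existence_uniqueness :
    ∃ η₀ : ℝ, 0 < η₀ ∧ ∀ η : ℝ, |η| < η₀ →
      ∃ ω ξ : ℝ → ℝ,
        (ContDiffOn ℝ 1 ω (Icc 0 1) ∧ ContDiffOn ℝ 1 ξ (Icc 0 1) ∧
          ω 0 = 0 ∧ ξ 0 = 0 ∧
          (∀ z ∈ Icc (0:ℝ) 1, ω z = z - ξ z ^ 2) ∧
          (∀ z ∈ Icc (0:ℝ) 1,
            HasDerivWithinAt (fun t => ω t * ξ t) (-η * ω z) (Icc 0 1) z)) ∧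
        (∀ z ∈ Ioc (0:ℝ) 1, 0 < ω z) ∧
        (∃ C : ℝ, ∀ z ∈ Icc (0:ℝ) 1, |ω z - z| ≤ C * z ^ 2) ∧
        (∀ ω' ξ' : ℝ → ℝ,
          (ContDiffOn ℝ 1 ω' (Icc 0 1) ∧ ContDiffOn ℝ 1 ξ' (Icc 0 1) ∧
            ω' 0 = 0 ∧ ξ' 0 = 0 ∧
            (∀ z ∈ Icc (0:ℝ) 1, ω' z = z - ξ' z ^ 2) ∧
            (∀ z ∈ Icc (0:ℝ) 1,
              HasDerivWithinAt (fun t => ω' t * ξ' t) (-η * ω' z) (Icc 0 1) z)) →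
          EqOn ω ω' (Icc 0 1) ∧ EqOn ξ ξ' (Icc 0 1)) := by

  refine ⟨1/100, by norm_num, ?_⟩
  intro η hηlt
  have hη : |η| ≤ 1/100 := le_of_lt hηlt
  obtain ⟨g, hgc, hgb, hgfix, huniq⟩ := tf_key hη
  refine ⟨tfOmega g, tfXi g, ⟨?_, ?_, ?_, ?_, ?_, ?_⟩, ?_, ?_, ?_⟩
  · exact tf_omega_contDiff hη hgc hgb hgfix
  · exact tf_xi_contDiff hη hgc hgb hgfix
  · simp [tfOmega]
  · simp [tfXi]
  · intro z hz; rfl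
  · intro z hz; exact tf_prod_deriv hgc hgfix hz
  · intro z hz; exact tf_omega_pos hgb hz
  · exact ⟨1, fun z hz => tf_omega_approx hgb hz⟩
  · rintro ω' ξ' ⟨hωc, hξc, hω0, hξ0, hωeq, hder⟩
    obtain ⟨g2, hg2c, hg2b, hg2fix, hξ'eq⟩ :=
      tf_competitor hη hωc hξc hω0 hξ0 hωeq hder
    have hEq : EqOn g g2 (Icc (0:ℝ) 1) := huniq g2 hg2c hg2b hg2fix
    constructor
    · intro z hz
      show tfOmega g z = ω' z
      rw [hωeq z hz]
      show z - (z * g z)^2 = z - ξ' z^2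
      rw [hξ'eq z hz, hEq hz]
    · intro z hz
      show tfXi g z = ξ' z
      rw [hξ'eq z hz]
      show z * g z = z * g2 z
      rw [hEq hz]
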